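/- Let P and Q be polytopes in ℝ^n (convex hulls of finite sets), each of affine dimension n−1, such that the affine hulls aff(P) and aff(Q) are parallel and disjoint affine hyperplanes. Then for every y ∈ conv(P ∪ Q) the following are equivalent: (1) y lies in the topological interior of conv(P ∪ Q); (2) there exist p ∈ relint(P) and q ∈ Q such that y lies in the open segment (p,q); (3) there exist p ∈ relint(P) and q ∈ relint(Q) such that y lies in the open segment (p,q). -/

import Mathlib

open Set Module

lemma relint_mem_iff {n : ℕ} (s : Set (Fin n → ℝ)) (x : Fin n → ℝ) :
    x ∈ intrinsicInterior ℝ s ↔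
      x ∈ affineSpan ℝ s ∧ ∃ V : Set (Fin n → ℝ), IsOpen V ∧ x ∈ V ∧
        V ∩ (affineSpan ℝ s : Set (Fin n → ℝ)) ⊆ s := by
  constructor
  · rintro ⟨x', hx', rfl⟩
    obtain ⟨t, hts, hto, hxt⟩ := mem_interior.mp hx'
    obtain ⟨V, hV, rfl⟩ := isOpen_induced_iff.mp hto
    refine ⟨x'.2, V, hV, hxt, ?_⟩
    rintro u ⟨huV, huS⟩
    exact hts (show (⟨u, huS⟩ : affineSpan ℝ s) ∈ _ from huV)
  · rintro ⟨hxs, V, hV, hxV, hsub⟩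
    refine ⟨⟨x, hxs⟩, ?_, rfl⟩
    refine mem_interior.mpr ⟨(↑) ⁻¹' V, ?_, ?_,
      show (⟨x, hxs⟩ : affineSpan ℝ s) ∈ (↑) ⁻¹' V from hxV⟩
    · intro u hu
      exact hsub ⟨hu, u.2⟩
    · exact isOpen_induced_iff.mpr ⟨V, hV, rfl⟩

lemma combo_relint {n : ℕ} {s : Set (Fin n → ℝ)} (hs : Convex ℝ s)
    {x y : Fin n → ℝ} (hx : x ∈ intrinsicInterior ℝ s) (hy : y ∈ s)
    {t : ℝ} (ht0 : 0 < t) (ht1 : t ≤ 1) :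
    t • x + (1 - t) • y ∈ intrinsicInterior ℝ s := by
  rw [relint_mem_iff] at hx ⊢
  obtain ⟨hxs, V, hV, hxV, hsub⟩ := hx
  have hys : y ∈ affineSpan ℝ s := mem_affineSpan (k := ℝ) hy
  constructor
  · have : t • (x - y) + y ∈ affineSpan ℝ s := by
      have := AffineSubspace.vadd_mem_of_mem_direction
        (Submodule.smul_mem _ t (AffineSubspace.vsub_mem_direction hxs hys)) hys
      simpa [vsub_eq_sub, vadd_eq_add] using this
    convert this using 1
    module
  · refine ⟨(fun u => t⁻¹ • (u - (1 - t) • y)) ⁻¹' V, ?_, ?_, ?_⟩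
    · exact ((continuous_id.sub continuous_const).const_smul t⁻¹).isOpen_preimage V hV
    · show t⁻¹ • (t • x + (1 - t) • y - (1 - t) • y) ∈ V
      rw [add_sub_cancel_right, inv_smul_smul₀ ht0.ne']
      exact hxV
    · rintro u ⟨huV, huS⟩
      have hwspan : t⁻¹ • (u - (1 - t) • y) ∈ affineSpan ℝ s := by
        have h1 : t⁻¹ • (u - y) + y ∈ affineSpan ℝ s := by
          have := AffineSubspace.vadd_mem_of_mem_direction
            (Submodule.smul_mem _ t⁻¹ (AffineSubspace.vsub_mem_direction huS hys)) hys
          simpa [vsub_eq_sub, vadd_eq_add] using this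
        convert h1 using 1
        have ht : t ≠ 0 := ht0.ne'
        match_scalars <;> field_simp <;> ring
      have hw : t⁻¹ • (u - (1 - t) • y) ∈ s := hsub ⟨huV, hwspan⟩
      have hu : u = t • (t⁻¹ • (u - (1 - t) • y)) + (1 - t) • y := by
        rw [smul_inv_smul₀ ht0.ne']; abel
      rw [hu]
      exact hs hw hy ht0.le (by linarith) (by ring)

set_option maxHeartbeats 2000000 in
/-- for polytopes `P`, `Q` of affine dimension `n-1` in `ℝⁿ` whose affine hulls
are parallel and disjoint hyperplanes, a point `y ∈ conv(P ∪ Q)` lies in the interior of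
`conv(P ∪ Q)` iff it lies on an open segment from a relative-interior point of `P` to a point
of `Q`, iff it lies on an open segment from a relative-interior point of `P` to a
relative-interior point of `Q`. -/
theorem stmt3 (n : ℕ) (P Q : Set (Fin n → ℝ))
    (hP : ∃ s : Finset (Fin n → ℝ), P = convexHull ℝ (↑s : Set (Fin n → ℝ)))
    (hQ : ∃ s : Finset (Fin n → ℝ), Q = convexHull ℝ (↑s : Set (Fin n → ℝ)))
    (hPdim : Module.finrank ℝ (affineSpan ℝ P).direction = n - 1)
    (hQdim : Module.finrank ℝ (affineSpan ℝ Q).direction = n - 1)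
    (hpar : (affineSpan ℝ P).Parallel (affineSpan ℝ Q))
    (hdisj : Disjoint (affineSpan ℝ P : Set (Fin n → ℝ)) (affineSpan ℝ Q : Set (Fin n → ℝ)))
    (y : Fin n → ℝ) (hy : y ∈ convexHull ℝ (P ∪ Q)) :
    (y ∈ interior (convexHull ℝ (P ∪ Q)) ↔
      ∃ p ∈ intrinsicInterior ℝ P, ∃ q ∈ Q, y ∈ openSegment ℝ p q) ∧
    (y ∈ interior (convexHull ℝ (P ∪ Q)) ↔
      ∃ p ∈ intrinsicInterior ℝ P, ∃ q ∈ intrinsicInterior ℝ Q, y ∈ openSegment ℝ p q) := by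
  classical
  -- nonemptiness of P and Q
  have hbotiff : affineSpan ℝ P = ⊥ ↔ affineSpan ℝ Q = ⊥ :=
    (AffineSubspace.parallel_iff_direction_eq_and_eq_bot_iff_eq_bot.mp hpar).2
  have hPne : P.Nonempty := by
    rw [nonempty_iff_ne_empty]
    intro hPe
    have hQe : Q = ∅ := (affineSpan_eq_bot ℝ).mp (hbotiff.mp ((affineSpan_eq_bot ℝ).mpr hPe))
    rw [hPe, hQe] at hy
    simp at hy
  have hQne : Q.Nonempty := by
    rw [nonempty_iff_ne_empty]
    intro hQe
    have hPe : P = ∅ := (affineSpan_eq_bot ℝ).mp (hbotiff.mpr ((affineSpan_eq_bot ℝ).mpr hQe))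
    rw [hPe, hQe] at hy
    simp at hy
  obtain ⟨a, ha⟩ := hPne
  obtain ⟨b, hb⟩ := hQne
  have haS : a ∈ affineSpan ℝ P := mem_affineSpan (k := ℝ) ha
  have hbS : b ∈ affineSpan ℝ Q := mem_affineSpan (k := ℝ) hb
  -- n ≥ 1
  have hn : 1 ≤ n := by
    by_contra h
    have hn0 : n = 0 := by omega
    subst hn0
    have hab : a = b := funext fun i => i.elim0
    exact (Set.disjoint_left.mp hdisj haS (hab ▸ hbS))
  -- convexity
  have convP : Convex ℝ P := by obtain ⟨s, rfl⟩ := hP; exact convex_convexHull ℝ _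
  have convQ : Convex ℝ Q := by obtain ⟨s, rfl⟩ := hQ; exact convex_convexHull ℝ _
  have hKeq : convexHull ℝ (P ∪ Q) = convexJoin ℝ P Q :=
    convP.convexHull_union convQ ⟨a, ha⟩ ⟨b, hb⟩
  -- the affine functional: 0 on aff P, 1 on aff Q
  have hexf : ∃ f : (Fin n → ℝ) → ℝ,
      (∀ x, x ∈ affineSpan ℝ P ↔ f x = 0) ∧
      (∀ x, x ∈ affineSpan ℝ Q ↔ f x = 1) ∧
      (∀ (r s : ℝ) (u v : Fin n → ℝ), r + s = 1 → f (r • u + s • v) = r * f u + s * f v) ∧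
      Continuous f ∧
      (∀ (u : Fin n → ℝ) (s : ℝ), f (u + s • (b - a)) = f u + s) := by
    set W := (affineSpan ℝ P).direction with hW
    have hWfin : finrank ℝ ((Fin n → ℝ) ⧸ W) = finrank ℝ ℝ := by
      have h1 := Submodule.finrank_quotient_add_finrank W
      rw [Module.finrank_fin_fun] at h1
      rw [Module.finrank_self]
      omega
    obtain ⟨e⟩ := FiniteDimensional.nonempty_linearEquiv_of_finrank_eq hWfin
    set ℓ : (Fin n → ℝ) →ₗ[ℝ] ℝ := e.toLinearMap.comp W.mkQ with hℓ
    have hker : ∀ v : Fin n → ℝ, ℓ v = 0 ↔ v ∈ W := by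
      intro v
      rw [hℓ]
      simp only [LinearMap.coe_comp, Function.comp_apply, LinearEquiv.coe_coe]
      rw [show (0 : ℝ) = e 0 by simp, e.injective.eq_iff,
        show (0 : (Fin n → ℝ) ⧸ W) = W.mkQ 0 by simp]
      rw [← LinearMap.sub_mem_ker_iff, Submodule.ker_mkQ]
      simp
    have hmemP : ∀ x : Fin n → ℝ, x ∈ affineSpan ℝ P ↔ ℓ (x - a) = 0 := by
      intro x
      rw [hker]
      rw [show x - a = x -ᵥ a from rfl]
      exact (AffineSubspace.vsub_right_mem_direction_iff_mem haS x).symm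
    have hdirQ : (affineSpan ℝ Q).direction = W := hpar.direction_eq.symm
    have hmemQ : ∀ x : Fin n → ℝ, x ∈ affineSpan ℝ Q ↔ ℓ (x - b) = 0 := by
      intro x
      rw [hker, ← hdirQ]
      rw [show x - b = x -ᵥ b from rfl]
      exact (AffineSubspace.vsub_right_mem_direction_iff_mem hbS x).symm
    have hcne : ℓ (b - a) ≠ 0 := by
      intro h
      exact Set.disjoint_left.mp hdisj ((hmemP b).mpr h) hbS
    refine ⟨fun x => ℓ (x - a) / ℓ (b - a), ?_, ?_, ?_, ?_, ?_⟩
    · intro x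
      rw [hmemP]
      rw [div_eq_zero_iff]
      exact ⟨fun h => Or.inl h, fun h => h.resolve_right hcne⟩
    · intro x
      rw [hmemQ]
      rw [div_eq_one_iff_eq hcne]
      have hlin : ℓ (x - b) = ℓ (x - a) - ℓ (b - a) := by
        rw [← map_sub]; congr 1; abel
      rw [hlin, sub_eq_zero]
    · intro r s u v hrs
      have h1 : ℓ (r • u + s • v - a) = r * ℓ (u - a) + s * ℓ (v - a) := by
        have h2 : r • u + s • v - a = r • (u - a) + s • (v - a) := by
          match_scalars <;> linarith
        rw [h2, map_add, map_smul, map_smul]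
        simp
      beta_reduce
      rw [h1]
      field_simp
    · exact ((ℓ.continuous_of_finiteDimensional).comp
        (continuous_id.sub continuous_const)).div_const _
    · intro u s
      beta_reduce
      rw [show u + s • (b - a) - a = (u - a) + s • (b - a) by abel, map_add, map_smul]
      rw [smul_eq_mul]
      have hne : ℓ b - ℓ a ≠ 0 := by rw [← map_sub]; exact hcne
      field_simp
  obtain ⟨f, hfP, hfQ, haff, hfcont, hshift⟩ := hexf
  have hfP0 : ∀ x ∈ P, f x = 0 := fun x hx => (hfP x).mp (mem_affineSpan (k := ℝ) hx)
  have hfQ1 : ∀ x ∈ Q, f x = 1 := fun x hx => (hfQ x).mp (mem_affineSpan (k := ℝ) hx)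
  -- decomposition of members of the hull
  have hdecomp : ∀ u ∈ convexHull ℝ (P ∪ Q), ∃ p ∈ P, ∃ q ∈ Q,
      (1 - f u) • p + f u • q = u ∧ 0 ≤ f u ∧ f u ≤ 1 := by
    intro u hu
    rw [hKeq, mem_convexJoin] at hu
    obtain ⟨p, hp, q, hq, hseg⟩ := hu
    obtain ⟨a₁, b₁, ha₁, hb₁, hab₁, habu⟩ := hseg
    have hfu : f u = b₁ := by
      rw [← habu, haff a₁ b₁ p q hab₁, hfP0 p hp, hfQ1 q hq]; ring
    refine ⟨p, hp, q, hq, ?_, by rw [hfu]; exact hb₁, by rw [hfu]; linarith⟩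
    rw [hfu, show (1 : ℝ) - b₁ = a₁ by linarith]
    exact habu
  -- implication (2) → interior
  have h2i : (∃ p ∈ intrinsicInterior ℝ P, ∃ q ∈ Q, y ∈ openSegment ℝ p q) →
      y ∈ interior (convexHull ℝ (P ∪ Q)) := by
    rintro ⟨p, hp, q, hq, hseg⟩
    obtain ⟨α, β, hα, hβ, hαβ, hyeq⟩ := hseg
    obtain ⟨hpS, V, hV, hpV, hsub⟩ := (relint_mem_iff P p).mp hp
    have hfy : f y = β := by
      rw [← hyeq, haff α β p q hαβ, (hfP p).mp hpS, hfQ1 q hq]; ring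
    set g : (Fin n → ℝ) → (Fin n → ℝ) := fun u => (1 - f u)⁻¹ • (u - f u • q) with hg
    set S : Set (Fin n → ℝ) := f ⁻¹' (Ioo 0 1) ∩ g ⁻¹' V with hS
    have hSopen : IsOpen S := by
      apply ContinuousOn.isOpen_inter_preimage _ (hfcont.isOpen_preimage _ isOpen_Ioo) hV
      refine ContinuousOn.smul (f := fun u => (1 - f u)⁻¹) (g := fun u => u - f u • q) ?_ ?_
      · apply ContinuousOn.inv₀
        · exact (continuousOn_const.sub hfcont.continuousOn)
        · intro u hu
          simp only [mem_preimage, mem_Ioo] at hu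
          intro h
          linarith [hu.2]
      · exact (continuous_id.sub (hfcont.smul continuous_const)).continuousOn
    have hyS : y ∈ S := by
      constructor
      · simp only [mem_preimage, mem_Ioo, hfy]
        exact ⟨hβ, by linarith⟩
      · show g y ∈ V
        rw [hg]
        simp only
        rw [hfy, show y - β • q = α • p by rw [← hyeq]; abel,
          show (1 : ℝ) - β = α by linarith, inv_smul_smul₀ hα.ne']
        exact hpV
    have hSsub : S ⊆ convexHull ℝ (P ∪ Q) := by
      rintro u ⟨hu1, hu2⟩
      simp only [mem_preimage, mem_Ioo] at hu1
      set t := f u with hfu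
      set w := g u with hwdef
      have hw1t : (1 : ℝ) - t ≠ 0 := by intro h; linarith [hu1.2]
      have huw : u = (1 - t) • w + t • q := by
        rw [hwdef, hg]
        simp only
        rw [← hfu, smul_inv_smul₀ hw1t]
        abel
      have hfw : f w = 0 := by
        have h0 := haff (1 - t) t w q (by ring)
        rw [← huw, hfQ1 q hq] at h0
        rw [← hfu] at h0
        have h3 : (1 - t) * f w = 0 := by linear_combination -h0
        rcases mul_eq_zero.mp h3 with h | h
        · exact absurd h hw1t
        · exact h
      have hwP : w ∈ P := hsub ⟨hu2, (hfP w).mpr hfw⟩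
      rw [huw]
      exact (convex_convexHull ℝ (P ∪ Q)) (subset_convexHull ℝ _ (Or.inl hwP))
        (subset_convexHull ℝ _ (Or.inr hq)) (by linarith [hu1.2]) hu1.1.le (by ring)
    exact mem_interior.mpr ⟨S, hSsub, hSopen, hyS⟩
  -- implication interior → (3)
  have hi3 : y ∈ interior (convexHull ℝ (P ∪ Q)) →
      ∃ p ∈ intrinsicInterior ℝ P, ∃ q ∈ intrinsicInterior ℝ Q, y ∈ openSegment ℝ p q := by
    intro hyi
    obtain ⟨ε, hε, hball⟩ := Metric.mem_nhds_iff.mp (mem_interior_iff_mem_nhds.mp hyi)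
    set t := f y with hty
    clear_value t
    -- f shifts along b - a
    have hvne : b - a ≠ 0 := by
      intro h
      have h1 := hshift a 1
      rw [h, smul_zero, add_zero] at h1
      linarith
    have hvnorm : 0 < ‖b - a‖ := by rwa [norm_pos_iff]
    have hK01 : ∀ u ∈ convexHull ℝ (P ∪ Q), 0 ≤ f u ∧ f u ≤ 1 := by
      intro u hu
      obtain ⟨_, _, _, _, _, h1, h2⟩ := hdecomp u hu
      exact ⟨h1, h2⟩
    have hmemball : ∀ s : ℝ, |s| * ‖b - a‖ < ε → y + s • (b - a) ∈ convexHull ℝ (P ∪ Q) := by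
      intro s hs
      apply hball
      rw [Metric.mem_ball, dist_eq_norm]
      rw [show y + s • (b - a) - y = s • (b - a) by abel, norm_smul]
      simpa using hs
    have ht0 : 0 < t := by
      by_contra h
      push_neg at h
      set s : ℝ := -(ε / (2 * ‖b - a‖)) with hs
      have hsabs : |s| * ‖b - a‖ < ε := by
        rw [hs, abs_neg, abs_of_pos (by positivity)]
        rw [div_mul_eq_mul_div, mul_comm]
        rw [div_lt_iff₀ (by positivity)]
        nlinarith
      have := (hK01 _ (hmemball s hsabs)).1
      rw [hshift y] at this
      have hsneg : s < 0 := by rw [hs]; simp; positivity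
      rw [← hty] at this
      linarith
    have ht1 : t < 1 := by
      by_contra h
      push_neg at h
      set s : ℝ := ε / (2 * ‖b - a‖) with hs
      have hsabs : |s| * ‖b - a‖ < ε := by
        rw [hs, abs_of_pos (by positivity)]
        rw [div_mul_eq_mul_div, mul_comm]
        rw [div_lt_iff₀ (by positivity)]
        nlinarith
      have := (hK01 _ (hmemball s hsabs)).2
      rw [hshift y] at this
      have hspos : 0 < s := by rw [hs]; positivity
      rw [← hty] at this
      linarith
    -- relative interior points
    obtain ⟨p₀, hp₀⟩ := Set.Nonempty.intrinsicInterior convP ⟨a, ha⟩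
    obtain ⟨q₀, hq₀⟩ := Set.Nonempty.intrinsicInterior convQ ⟨b, hb⟩
    have hp₀P : p₀ ∈ P := intrinsicInterior_subset hp₀
    have hq₀Q : q₀ ∈ Q := intrinsicInterior_subset hq₀
    set y' : Fin n → ℝ := (1 - t) • p₀ + t • q₀ with hy'
    clear_value y'
    have hfy' : f y' = t := by
      rw [hy', haff (1 - t) t p₀ q₀ (by ring), hfP0 p₀ hp₀P, hfQ1 q₀ hq₀Q]; ring
    by_cases hyy' : y = y'
    · exact ⟨p₀, hp₀, q₀, hq₀, (1 - t), t, by linarith, ht0, by ring, by rw [hy'] at hyy'; exact hyy'.symm⟩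
    · have hδ : 0 < ‖y - y'‖ := by
        rw [norm_pos_iff]
        intro h
        exact hyy' (by rwa [sub_eq_zero] at h)
      set ε' : ℝ := ε / (2 * ‖y - y'‖) with hε'
      have hε'pos : 0 < ε' := by rw [hε']; exact div_pos hε (by linarith)
      clear_value ε'
      set z : Fin n → ℝ := y + ε' • (y - y') with hz
      clear_value z
      have hzK : z ∈ convexHull ℝ (P ∪ Q) := by
        apply hball
        rw [Metric.mem_ball, dist_eq_norm, hz,
          show y + ε' • (y - y') - y = ε' • (y - y') by abel, norm_smul,
          Real.norm_eq_abs, abs_of_pos hε'pos, hε']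
        rw [div_mul_eq_mul_div, mul_comm]
        rw [div_lt_iff₀ (by positivity)]
        nlinarith
      have hfz : f z = t := by
        have : z = (1 + ε') • y + (-ε') • y' := by rw [hz]; module
        rw [this, haff (1 + ε') (-ε') y y' (by ring), hfy', ← hty]; ring
      obtain ⟨p₁, hp₁, q₁, hq₁, hzeq, _, _⟩ := hdecomp z hzK
      rw [hfz] at hzeq
      set θ : ℝ := (1 + ε')⁻¹ with hθ
      have h1 : (1 : ℝ) + ε' ≠ 0 := ne_of_gt (by linarith)
      have hθpos : 0 < θ := by rw [hθ]; exact inv_pos.mpr (by linarith)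
      have hθmul : θ * (1 + ε') = 1 := by rw [hθ]; exact inv_mul_cancel₀ h1
      have hyzy' : y = θ • z + (1 - θ) • y' := by
        rw [hz]
        match_scalars <;> (rw [hθ]; field_simp <;> ring)
      clear_value θ
      have hθlt : θ < 1 := by nlinarith
      set p : Fin n → ℝ := (1 - θ) • p₀ + θ • p₁ with hp'
      set q : Fin n → ℝ := (1 - θ) • q₀ + θ • q₁ with hq'
      have hpint : p ∈ intrinsicInterior ℝ P := by
        have he : p = (1 - θ) • p₀ + (1 - (1 - θ)) • p₁ := by rw [hp']; module
        rw [he]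
        exact combo_relint convP hp₀ hp₁ (by linarith) (by linarith)
      have hqint : q ∈ intrinsicInterior ℝ Q := by
        have he : q = (1 - θ) • q₀ + (1 - (1 - θ)) • q₁ := by rw [hq']; module
        rw [he]
        exact combo_relint convQ hq₀ hq₁ (by linarith) (by linarith)
      refine ⟨p, hpint, q, hqint, (1 - t), t, by linarith, ht0, by ring, ?_⟩
      rw [hp', hq', hyzy', ← hzeq, hy']
      module
  constructor
  · constructor
    · intro h
      obtain ⟨p, hp, q, hq, hseg⟩ := hi3 h
      exact ⟨p, hp, q, intrinsicInterior_subset hq, hseg⟩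
    · exact h2i
  · constructor
    · exact hi3
    · intro ⟨p, hp, q, hq, hseg⟩
      exact h2i ⟨p, hp, q, intrinsicInterior_subset hq, hseg⟩
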